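/- Column insertion into a single column: let (a₁, ..., a_r) be a column-semistandard word over B and b ∈ B. If appending b at the bottom keeps the column semistandard, the insertion outputs the letter a₁ and the column (a₂, ..., a_r, b). Otherwise, letting ν be the smallest index such that the row pair (b, a_ν) is row-semistandard, the insertion outputs the letter a_ν and the column (a₁, ..., a_{ν−1}, b, a_{ν+1}, ..., a_r); this replaced column is again column-semistandard. In particular, the resulting map from {column-semistandard words of length r} × B to B × {column-semistandard words of length r} is a bijection (with inverse given by the reverse bumping procedure). -/

import Mathlib

/-- Row-semistandardness of a horizontal pair of letters (codes `0,…,m+n-1`,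
barred = codes `< m`). -/
def rowSS (m x y : ℕ) : Prop := x ≤ y ∧ (x = y → x < m)

/-- Column-semistandardness of a vertical pair of letters. -/
def colSS (m x y : ℕ) : Prop := x ≤ y ∧ (x = y → m ≤ x)

instance (m x y : ℕ) : Decidable (rowSS m x y) := by unfold rowSS; infer_instance
instance (m x y : ℕ) : Decidable (colSS m x y) := by unfold colSS; infer_instance
instance (m : ℕ) : DecidableRel (colSS m) := fun _ _ => inferInstance

/-- Column insertion of a letter `b` into a column word `l = (a₁, …, a_r)`:
if appending `b` at the bottom keeps the column semistandard, the output is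
the letter `a₁` together with the column `(a₂, …, a_r, b)`; otherwise, letting
`ν` be the smallest index such that `(b, a_ν)` is row-semistandard, the output
is the letter `a_ν` together with `l` with `a_ν` replaced by `b`. -/
def colInsert (m : ℕ) (l : List ℕ) (b : ℕ) : ℕ × List ℕ :=
  if (l ++ [b]).IsChain (colSS m) then ((l ++ [b]).headI, (l ++ [b]).tail)
  else
    (l.getD (l.findIdx fun a => decide (rowSS m b a)) 0,
     l.set (l.findIdx fun a => decide (rowSS m b a)) b)

/-! ### Auxiliary arithmetic lemmas -/

private lemma not_rowSS_iff {m x y : ℕ} : ¬ rowSS m x y ↔ colSS m y x := by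
  unfold rowSS colSS; omega

private lemma not_colSS_iff {m x y : ℕ} : ¬ colSS m x y ↔ rowSS m y x := by
  unfold rowSS colSS; omega

private lemma colSS_trans' {m x y z : ℕ} (h1 : colSS m x y) (h2 : colSS m y z) :
    colSS m x z := by unfold colSS at *; omega

instance (m : ℕ) : IsTrans ℕ (colSS m) := ⟨fun _ _ _ => colSS_trans'⟩

private lemma rowSS_colSS {m b x y : ℕ} (h1 : rowSS m b x) (h2 : colSS m x y) :
    colSS m b y := by unfold rowSS colSS at *; omega

private lemma colSS_rowSS {m x y c : ℕ} (h1 : colSS m x y) (h2 : rowSS m y c) :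
    colSS m x c := by unfold rowSS colSS at *; omega

private lemma not_colSS_of_rowSS {m x c : ℕ} (h : rowSS m x c) : ¬ colSS m c x := by
  unfold rowSS colSS at *; omega

private lemma colSS_antisymm {m x y : ℕ} (h1 : colSS m x y) (h2 : colSS m y x) :
    x = y := by unfold colSS at *; omega

/-! ### getD lemmas -/

private lemma getD_mem {l : List ℕ} {i : ℕ} (h : i < l.length) : l.getD i 0 ∈ l := by
  rw [List.getD_eq_getElem _ _ h]; exact List.getElem_mem h

private lemma getD_set {l : List ℕ} {ν i b : ℕ} (h : i < l.length) :
    (l.set ν b).getD i 0 = if ν = i then b else l.getD i 0 := by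
  rw [List.getD_eq_getElem _ _ (by simpa using h), List.getElem_set,
    List.getD_eq_getElem _ _ h]

private lemma getD_append_left {l : List ℕ} {b i : ℕ} (h : i < l.length) :
    (l ++ [b]).getD i 0 = l.getD i 0 := by
  rw [List.getD_eq_getElem _ _ (by simp; omega), List.getD_eq_getElem _ _ h,
    List.getElem_append_left h]

private lemma getD_append_last {l : List ℕ} {b : ℕ} :
    (l ++ [b]).getD l.length 0 = b := by
  rw [List.getD_eq_getElem _ _ (by simp)]
  simp

private lemma set_getD_self {l : List ℕ} {i : ℕ} (h : i < l.length) :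
    l.set i (l.getD i 0) = l := by
  apply List.ext_getElem (by simp)
  intro j h1 h2
  rw [List.getElem_set]
  split
  · next he =>
      subst he
      rw [List.getD_eq_getElem _ _ h]
  · rfl

private lemma chain'_iff_getD {m : ℕ} {l : List ℕ} :
    l.Chain' (colSS m) ↔ ∀ i, i + 1 < l.length → colSS m (l.getD i 0) (l.getD (i + 1) 0) := by
  show l.IsChain _ ↔ _
  rw [List.isChain_iff_getElem]
  constructor
  · intro h i hi
    rw [List.getD_eq_getElem _ _ (by omega), List.getD_eq_getElem _ _ hi]
    simpa [List.get_eq_getElem] using h i (by omega)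
  · intro h i hi
    have := h i (by omega)
    rw [List.getD_eq_getElem _ _ (by omega), List.getD_eq_getElem _ _ (by omega)] at this
    simpa [List.get_eq_getElem] using this

private lemma chain'_getD_of_lt {m : ℕ} {l : List ℕ} (h : l.Chain' (colSS m)) :
    ∀ {i j : ℕ}, i < j → j < l.length → colSS m (l.getD i 0) (l.getD j 0) := by
  intro i j
  induction j with
  | zero => omega
  | succ j ih =>
    intro hij hj
    have hstep : colSS m (l.getD j 0) (l.getD (j + 1) 0) := chain'_iff_getD.mp h j hj
    rcases Nat.lt_or_ge i j with h' | h'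
    · exact colSS_trans' (ih h' (by omega)) hstep
    · have : i = j := by omega
      subst this; exact hstep

/-! ### The bumping case of `colInsert` -/

private lemma bump_exists {m : ℕ} {l : List ℕ} {b : ℕ} (hl : l.Chain' (colSS m))
    (hnc : ¬ (l ++ [b]).Chain' (colSS m)) :
    ∃ ν, ν < l.length ∧ rowSS m b (l.getD ν 0) ∧
      (∀ ν' < ν, ¬ rowSS m b (l.getD ν' 0)) ∧
      colInsert m l b = (l.getD ν 0, l.set ν b) ∧
      (l.set ν b).Chain' (colSS m) := by
  have hne : l ≠ [] := by
    rintro rfl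
    exact hnc (by simp [List.Chain'])
  have hlen : 0 < l.length := List.length_pos_iff.mpr hne
  -- the last entry of `l` is bumpable
  have hlast : rowSS m b (l.getD (l.length - 1) 0) := by
    by_contra hcon
    rw [not_rowSS_iff] at hcon
    apply hnc
    rw [chain'_iff_getD]
    intro i hi
    simp only [List.length_append, List.length_singleton] at hi
    rcases Nat.lt_or_ge (i + 1) l.length with h' | h'
    · rw [getD_append_left (by omega), getD_append_left h']
      exact chain'_iff_getD.mp hl i h'
    · have : i + 1 = l.length := by omega
      rw [getD_append_left (by omega), this, getD_append_last]
      have : i = l.length - 1 := by omega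
      rw [this]
      exact hcon
  set p : ℕ → Bool := fun a => decide (rowSS m b a) with hp
  have hex : ∃ x ∈ l, p x :=
    ⟨l.getD (l.length - 1) 0, getD_mem (by omega), by simpa [hp] using hlast⟩
  set ν := l.findIdx p with hν
  have h1 : ν < l.length := List.findIdx_lt_length_of_exists hex
  have h2 : rowSS m b (l.getD ν 0) := by
    rw [List.getD_eq_getElem _ _ h1]
    have := List.findIdx_getElem (w := h1)
    simpa [hp] using this
  have h3 : ∀ ν' < ν, ¬ rowSS m b (l.getD ν' 0) := by
    intro ν' hν'
    have hlt : ν' < l.length := by omega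
    have := List.not_of_lt_findIdx (p := p) (xs := l) (i := ν') hν'
    rw [List.getD_eq_getElem _ _ hlt]
    simpa [hp] using this
  refine ⟨ν, h1, h2, h3, ?_, ?_⟩
  · simp only [colInsert, if_neg (show ¬ (l ++ [b]).IsChain (colSS m) from hnc)]
    rfl
  · rw [chain'_iff_getD]
    intro i hi
    simp only [List.length_set] at hi
    rw [getD_set (by omega), getD_set (by omega)]
    rcases eq_or_ne ν i with he | hne1
    · rw [if_pos he, if_neg (by omega)]
      exact rowSS_colSS (he ▸ h2) (chain'_iff_getD.mp hl i hi)
    · rcases eq_or_ne ν (i + 1) with he | hne2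
      · rw [if_neg hne1, if_pos he]
        have := h3 i (by omega)
        rw [not_rowSS_iff] at this
        exact this
      · rw [if_neg hne1, if_neg hne2]
        exact chain'_iff_getD.mp hl i hi

/-- Reverse bumping: the inverse of column insertion. -/
private def colExtract (m : ℕ) (q : ℕ × List ℕ) : List ℕ × ℕ :=
  let μ := Nat.findGreatest (fun μ => μ < q.2.length ∧ rowSS m (q.2.getD μ 0) q.1) q.2.length
  if μ < q.2.length ∧ rowSS m (q.2.getD μ 0) q.1 then (q.2.set μ q.1, q.2.getD μ 0)
  else ((q.1 :: q.2).dropLast, (q.1 :: q.2).getLastD 0)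

private lemma dropLast_append_getLastD {xs : List ℕ} (h : xs ≠ []) :
    xs.dropLast ++ [xs.getLastD 0] = xs := by
  cases xs with
  | nil => simp at h
  | cons a l =>
    have := List.dropLast_concat_getLast (l := a :: l) (by simp)
    rwa [List.getLast_eq_getLastD, ← List.getLastD_cons] at this

private lemma extract_set_chain {m : ℕ} {l' : List ℕ} {c μ : ℕ} (hl : l'.Chain' (colSS m))
    (hμ : μ < l'.length) (hrow : rowSS m (l'.getD μ 0) c)
    (hmax : ∀ k, μ < k → k < l'.length → ¬ rowSS m (l'.getD k 0) c) :
    (l'.set μ c).Chain' (colSS m) := by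
  rw [chain'_iff_getD]
  intro i hi
  simp only [List.length_set] at hi
  rw [getD_set (by omega), getD_set (by omega)]
  rcases eq_or_ne μ i with he | hne1
  · rw [if_pos he, if_neg (by omega)]
    have := hmax (i + 1) (by omega) hi
    rwa [not_rowSS_iff] at this
  · rcases eq_or_ne μ (i + 1) with he | hne2
    · rw [if_neg hne1, if_pos he]
      exact colSS_rowSS (chain'_iff_getD.mp hl i hi) (he ▸ hrow)
    · rw [if_neg hne1, if_neg hne2]
      exact chain'_iff_getD.mp hl i hi

private lemma extract_not_chain {m : ℕ} {l' : List ℕ} {c μ : ℕ} (hl : l'.Chain' (colSS m))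
    (hμ : μ < l'.length) (hrow : rowSS m (l'.getD μ 0) c)
    (hmax : ∀ k, μ < k → k < l'.length → ¬ rowSS m (l'.getD k 0) c) :
    ¬ (l'.set μ c ++ [l'.getD μ 0]).Chain' (colSS m) := by
  intro hch
  have hL : (l'.set μ c).length = l'.length := by simp
  have hstep := chain'_iff_getD.mp hch (l'.length - 1) (by simp; omega)
  have he1 : l'.length - 1 + 1 = (l'.set μ c).length := by omega
  rw [getD_append_left (by omega), he1, getD_append_last] at hstep
  rw [getD_set (by omega)] at hstep
  rcases eq_or_ne μ (l'.length - 1) with he | hne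
  · rw [if_pos he] at hstep
    exact not_colSS_of_rowSS hrow hstep
  · rw [if_neg hne] at hstep
    have hlt : μ < l'.length - 1 := by omega
    have hcs : colSS m (l'.getD μ 0) (l'.getD (l'.length - 1) 0) :=
      chain'_getD_of_lt hl hlt (by omega)
    have heq := colSS_antisymm hstep hcs
    exact hmax (l'.length - 1) hlt (by omega) (by rw [heq]; exact hrow)

private lemma no_reverse_of_chain_cons {m a : ℕ} {l₂ : List ℕ}
    (h : (a :: l₂).Chain' (colSS m)) : ∀ μ, μ < l₂.length → ¬ rowSS m (l₂.getD μ 0) a := by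
  intro μ hμ
  rw [not_rowSS_iff]
  have := chain'_getD_of_lt h (i := 0) (j := μ + 1) (by omega)
    (by simpa using Nat.succ_lt_succ hμ)
  simpa using this

private lemma colExtract_eq_of {m c μ : ℕ} {l' : List ℕ}
    (hμ : μ < l'.length) (hrow : rowSS m (l'.getD μ 0) c)
    (hmax : ∀ k, μ < k → k < l'.length → ¬ rowSS m (l'.getD k 0) c) :
    colExtract m (c, l') = (l'.set μ c, l'.getD μ 0) := by
  have hfg : Nat.findGreatest (fun μ => μ < l'.length ∧ rowSS m (l'.getD μ 0) c) l'.length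
      = μ := by
    rw [Nat.findGreatest_eq_iff]
    refine ⟨le_of_lt hμ, fun _ => ⟨hμ, hrow⟩, fun k hk hk' hP => ?_⟩
    exact hmax k hk hP.1 hP.2
  simp only [colExtract]
  rw [hfg, if_pos ⟨hμ, hrow⟩]

private lemma colExtract_pos {m c : ℕ} {l' : List ℕ}
    (hex : ∃ μ₀, μ₀ < l'.length ∧ rowSS m (l'.getD μ₀ 0) c) :
    ∃ μ, μ < l'.length ∧ rowSS m (l'.getD μ 0) c ∧
      (∀ k, μ < k → k < l'.length → ¬ rowSS m (l'.getD k 0) c) ∧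
      colExtract m (c, l') = (l'.set μ c, l'.getD μ 0) := by
  obtain ⟨μ₀, hμ₀, hrow₀⟩ := hex
  have hPfg : Nat.findGreatest (fun μ => μ < l'.length ∧ rowSS m (l'.getD μ 0) c) l'.length
        < l'.length ∧
      rowSS m ((l'.getD (Nat.findGreatest
        (fun μ => μ < l'.length ∧ rowSS m (l'.getD μ 0) c) l'.length)) 0) c :=
    Nat.findGreatest_spec (P := fun μ => μ < l'.length ∧ rowSS m (l'.getD μ 0) c)
      (le_of_lt hμ₀) ⟨hμ₀, hrow₀⟩
  have hmax : ∀ k, Nat.findGreatest (fun μ => μ < l'.length ∧ rowSS m (l'.getD μ 0) c)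
      l'.length < k → k < l'.length → ¬ rowSS m (l'.getD k 0) c := by
    intro k hk hk' hr
    exact Nat.findGreatest_is_greatest hk (le_of_lt hk') ⟨hk', hr⟩
  exact ⟨_, hPfg.1, hPfg.2, hmax, colExtract_eq_of hPfg.1 hPfg.2 hmax⟩

private lemma colExtract_eq_neg {m c : ℕ} {l' : List ℕ}
    (hnex : ∀ μ, μ < l'.length → ¬ rowSS m (l'.getD μ 0) c) :
    colExtract m (c, l') = ((c :: l').dropLast, (c :: l').getLastD 0) := by
  simp only [colExtract]
  rw [if_neg]
  rintro ⟨h1, h2⟩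
  exact hnex _ h1 h2

theorem colInsert_spec (m n r : ℕ) :
    (∀ (l : List ℕ) (b : ℕ), l.Chain' (colSS m) → (∀ x ∈ l, x < m + n) →
      b < m + n → ¬ (l ++ [b]).Chain' (colSS m) →
      ∃ ν, ν < l.length ∧ rowSS m b (l.getD ν 0) ∧
        (∀ ν' < ν, ¬ rowSS m b (l.getD ν' 0)) ∧
        colInsert m l b = (l.getD ν 0, l.set ν b) ∧
        (l.set ν b).Chain' (colSS m)) ∧
    Set.BijOn (fun p : List ℕ × ℕ => colInsert m p.1 p.2)
      {p : List ℕ × ℕ | p.1.Chain' (colSS m) ∧ (∀ x ∈ p.1, x < m + n) ∧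
        p.1.length = r ∧ p.2 < m + n}
      {p : ℕ × List ℕ | p.1 < m + n ∧ p.2.Chain' (colSS m) ∧
        (∀ x ∈ p.2, x < m + n) ∧ p.2.length = r} := by
  refine ⟨fun l b hl _ _ hnc => bump_exists hl hnc, ?_⟩
  apply Set.InvOn.bijOn (f' := colExtract m) ⟨?_, ?_⟩ ?_ ?_
  · -- LeftInvOn: colExtract ∘ colInsert = id on s
    rintro ⟨l, b⟩ ⟨hl, hlb, hlen, hb⟩
    simp only [Function.comp]
    by_cases hc : (l ++ [b]).Chain' (colSS m)
    · cases l with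
      | nil =>
        have hf : colInsert m ([] : List ℕ) b = (b, []) := by
          simp [colInsert]
        rw [hf, colExtract_eq_neg (by simp)]
        simp
      | cons a l₁ =>
        have hf : colInsert m (a :: l₁) b = (a, l₁ ++ [b]) := by
          rw [colInsert, if_pos (show (a :: l₁ ++ [b]).IsChain (colSS m) from hc)]
          simp
        rw [hf]
        have hc' : (a :: (l₁ ++ [b])).Chain' (colSS m) := by
          rwa [← List.cons_append]
        rw [colExtract_eq_neg (no_reverse_of_chain_cons hc')]
        have h2 : a :: (l₁ ++ [b]) = (a :: l₁) ++ [b] := by simp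
        rw [h2, List.dropLast_concat, List.getLastD_concat]
    · obtain ⟨ν, hν, hrow, hmin, heq, hch⟩ := bump_exists hl hc
      rw [heq]
      have hgν : (l.set ν b).getD ν 0 = b := by rw [getD_set hν, if_pos rfl]
      have hrw : rowSS m ((l.set ν b).getD ν 0) (l.getD ν 0) := by rw [hgν]; exact hrow
      have hmx : ∀ k, ν < k → k < (l.set ν b).length →
          ¬ rowSS m ((l.set ν b).getD k 0) (l.getD ν 0) := by
        intro k hk hk'
        simp only [List.length_set] at hk'
        rw [getD_set hk', if_neg (by omega)]
        exact not_rowSS_iff.mpr (chain'_getD_of_lt hl hk hk')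
      rw [colExtract_eq_of (by simpa using hν) hrw hmx]
      rw [List.set_set, set_getD_self hν, hgν]
  · -- RightInvOn : colInsert ∘ colExtract = id on t
    rintro ⟨c, l'⟩ ⟨hc, hl', hl'b, hlen⟩
    simp only [Function.comp]
    by_cases hex : ∃ μ₀, μ₀ < l'.length ∧ rowSS m (l'.getD μ₀ 0) c
    · obtain ⟨μ, hμ, hrow, hmax, heq⟩ := colExtract_pos hex
      have hnc := extract_not_chain hl' hμ hrow hmax
      have hsc := extract_set_chain hl' hμ hrow hmax
      obtain ⟨ν, hν, hrow', hmin, heq', hch'⟩ := bump_exists hsc hnc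
      have hν' : ν < l'.length := by simpa using hν
      have hgμ : (l'.set μ c).getD μ 0 = c := by rw [getD_set hμ, if_pos rfl]
      have hrμ : rowSS m (l'.getD μ 0) ((l'.set μ c).getD μ 0) := by
        rw [hgμ]; exact hrow
      have hνμ : ν = μ := by
        rcases lt_trichotomy ν μ with h | h | h
        · exfalso
          have hrν := hrow'
          rw [getD_set hν', if_neg (by omega)] at hrν
          exact (not_rowSS_iff.mpr (chain'_getD_of_lt hl' h hμ)) hrν
        · exact h
        · exact absurd hrμ (hmin μ h)
      rw [hνμ] at heq'
      rw [heq]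
      show colInsert m (l'.set μ c) (l'.getD μ 0) = (c, l')
      rw [heq', hgμ, List.set_set, set_getD_self hμ]
    · have hnex : ∀ μ, μ < l'.length → ¬ rowSS m (l'.getD μ 0) c := by
        push_neg at hex
        exact hex
      rw [colExtract_eq_neg hnex]
      show colInsert m ((c :: l').dropLast) ((c :: l').getLastD 0) = (c, l')
      have hch : (c :: l').Chain' (colSS m) := by
        cases l' with
        | nil => simp [List.Chain']
        | cons a l₁ =>
          show List.IsChain _ _
          rw [List.isChain_cons_cons]
          refine ⟨?_, hl'⟩
          have := hnex 0 (by simp)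
          rw [not_rowSS_iff] at this
          simpa using this
      have happ : (c :: l').dropLast ++ [(c :: l').getLastD 0] = c :: l' :=
        dropLast_append_getLastD (by simp)
      rw [colInsert, happ, if_pos (show (c :: l').IsChain (colSS m) from hch)]
      simp
  · -- MapsTo colInsert s t
    rintro ⟨l, b⟩ ⟨hl, hlb, hlen, hb⟩
    simp only [Set.mem_setOf_eq]
    by_cases hc : (l ++ [b]).Chain' (colSS m)
    · cases l with
      | nil =>
        have hf : colInsert m ([] : List ℕ) b = (b, []) := by simp [colInsert]
        rw [hf]
        simp at hlen
        exact ⟨hb, by simp [List.Chain'], by simp, by simp [hlen]⟩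
      | cons a l₁ =>
        have hf : colInsert m (a :: l₁) b = (a, l₁ ++ [b]) := by
          rw [colInsert, if_pos (show (a :: l₁ ++ [b]).IsChain (colSS m) from hc)]
          simp
        rw [hf]
        refine ⟨hlb a (by simp), ?_, ?_, ?_⟩
        · have : (a :: (l₁ ++ [b])).Chain' (colSS m) := by rwa [← List.cons_append]
          exact this.tail
        · intro x hx
          rcases List.mem_append.mp hx with h | h
          · exact hlb x (by simp [h])
          · simp at h
            omega
        · simp at hlen ⊢
          omega
    · obtain ⟨ν, hν, hrow, hmin, heq, hch⟩ := bump_exists hl hc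
      rw [heq]
      refine ⟨hlb _ (getD_mem hν), hch, ?_, by simpa using hlen⟩
      intro x hx
      rcases List.mem_or_eq_of_mem_set hx with h | h
      · exact hlb x h
      · omega
  · -- MapsTo colExtract t s
    rintro ⟨c, l'⟩ ⟨hc, hl', hl'b, hlen⟩
    simp only [Set.mem_setOf_eq]
    by_cases hex : ∃ μ₀, μ₀ < l'.length ∧ rowSS m (l'.getD μ₀ 0) c
    · obtain ⟨μ, hμ, hrow, hmax, heq⟩ := colExtract_pos hex
      show (colExtract m (c, l')).1.Chain' (colSS m) ∧ _
      rw [heq]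
      refine ⟨extract_set_chain hl' hμ hrow hmax, ?_, by simpa using hlen,
        hl'b _ (getD_mem hμ)⟩
      intro x hx
      rcases List.mem_or_eq_of_mem_set hx with h | h
      · exact hl'b x h
      · omega
    · have hnex : ∀ μ, μ < l'.length → ¬ rowSS m (l'.getD μ 0) c := by
        push_neg at hex
        exact hex
      show (colExtract m (c, l')).1.Chain' (colSS m) ∧ _
      rw [colExtract_eq_neg hnex]
      have hch : (c :: l').Chain' (colSS m) := by
        cases l' with
        | nil => simp [List.Chain']
        | cons a l₁ =>
          show List.IsChain _ _
          rw [List.isChain_cons_cons]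
          refine ⟨?_, hl'⟩
          have := hnex 0 (by simp)
          rw [not_rowSS_iff] at this
          simpa using this
      refine ⟨hch.sublist (List.dropLast_sublist _), ?_, by simp [hlen], ?_⟩
      · intro x hx
        have : x ∈ c :: l' := (List.dropLast_sublist _).mem hx
        rcases List.mem_cons.mp this with h | h
        · omega
        · exact hl'b x h
      · have h0 : (c :: l').getLastD 0 = l'.getLastD c := List.getLastD_cons
        rw [h0]
        have : l'.getLastD c ∈ c :: l' := List.getLastD_mem_cons
        rcases List.mem_cons.mp this with h | h
        · omega
        · exact hl'b _ h
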